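/- Let G be a group, A a finite abelian group, ρ : G → Aut(A) a homomorphism, π : G → A a bijective 1-cocycle, A* = Hom(A, ℂˣ), and G̃ = G ⋉ A* (with g acting on χ by χ ∘ ρ(g)⁻¹); regard G and A* as subgroups of G̃. Define T : A → A by T(x) = π((π⁻¹(x⁻¹))⁻¹), equivalently π⁻¹(x⁻¹)·π⁻¹(T(x)) = 1 in G. Then T is a bijection of A, and the element J̄ = |A|⁻¹ Σ_{x ∈ A, χ ∈ A*} χ(x) · π⁻¹(x) ⊗ χ ∈ ℂ[G̃] ⊗ ℂ[G̃] is invertible, with J̄⁻¹ = |A|⁻¹ Σ_{z ∈ A, τ ∈ A*} τ(z)⁻¹ · π⁻¹(T(z)) ⊗ τ. -/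

import Mathlib

open TensorProduct

noncomputable section

variable (G : Type*) [Group G]

/-- Comultiplication on the group algebra `ℂ[G]`, determined by `Δ(g) = g ⊗ g`. -/
def GroupAlgebra.comul :
    MonoidAlgebra ℂ G →ₐ[ℂ] MonoidAlgebra ℂ G ⊗[ℂ] MonoidAlgebra ℂ G :=
  (MonoidAlgebra.lift ℂ _ G)
    { toFun := fun g => MonoidAlgebra.of ℂ G g ⊗ₜ[ℂ] MonoidAlgebra.of ℂ G g
      map_one' := by simp [Algebra.TensorProduct.one_def, MonoidAlgebra.one_def]
      map_mul' := fun g h => by simp [Algebra.TensorProduct.tmul_mul_tmul] }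

/-- Counit on the group algebra `ℂ[G]`, determined by `ε(g) = 1`. -/
def GroupAlgebra.counit : MonoidAlgebra ℂ G →ₐ[ℂ] ℂ :=
  (MonoidAlgebra.lift ℂ ℂ G) 1

/-- The equation `((Δ ⊗ id)(J))·(J ⊗ 1) = ((id ⊗ Δ)(J))·(1 ⊗ J)` in `ℂ[G] ⊗ ℂ[G] ⊗ ℂ[G]`. -/
def GroupAlgebra.TwistEq (J : MonoidAlgebra ℂ G ⊗[ℂ] MonoidAlgebra ℂ G) : Prop :=
  (Algebra.TensorProduct.assoc ℂ ℂ ℂ (MonoidAlgebra ℂ G) (MonoidAlgebra ℂ G) (MonoidAlgebra ℂ G))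
      ((Algebra.TensorProduct.map (GroupAlgebra.comul G) (AlgHom.id ℂ (MonoidAlgebra ℂ G))) J) *
    (Algebra.TensorProduct.assoc ℂ ℂ ℂ (MonoidAlgebra ℂ G) (MonoidAlgebra ℂ G) (MonoidAlgebra ℂ G))
      (J ⊗ₜ[ℂ] (1 : MonoidAlgebra ℂ G)) =
  (Algebra.TensorProduct.map (AlgHom.id ℂ (MonoidAlgebra ℂ G)) (GroupAlgebra.comul G)) J *
    ((1 : MonoidAlgebra ℂ G) ⊗ₜ[ℂ] J)

/-- The equations `(ε ⊗ id)(J) = 1` and `(id ⊗ ε)(J) = 1`. -/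
def GroupAlgebra.CounitEq (J : MonoidAlgebra ℂ G ⊗[ℂ] MonoidAlgebra ℂ G) : Prop :=
  (Algebra.TensorProduct.lid ℂ (MonoidAlgebra ℂ G))
      ((Algebra.TensorProduct.map (GroupAlgebra.counit G) (AlgHom.id ℂ (MonoidAlgebra ℂ G))) J) = 1 ∧
  (Algebra.TensorProduct.rid ℂ ℂ (MonoidAlgebra ℂ G))
      ((Algebra.TensorProduct.map (AlgHom.id ℂ (MonoidAlgebra ℂ G)) (GroupAlgebra.counit G)) J) = 1

/-- A twist for the group algebra `ℂ[G]`: an invertible element of `ℂ[G] ⊗ ℂ[G]` satisfying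
`((Δ ⊗ id)(J))·(J ⊗ 1) = ((id ⊗ Δ)(J))·(1 ⊗ J)` and `(ε ⊗ id)(J) = (id ⊗ ε)(J) = 1`. -/
def GroupAlgebra.IsTwist (J : MonoidAlgebra ℂ G ⊗[ℂ] MonoidAlgebra ℂ G) : Prop :=
  IsUnit J ∧ GroupAlgebra.TwistEq G J ∧ GroupAlgebra.CounitEq G J

end

/-- The `ℂ`-linear map `ℂ[A] → ℂ[G]` sending the basis element `a` to `p a`. -/
noncomputable def GroupAlgebra.transport (A G : Type*) [Group A] [Group G] (p : A → G) :
    MonoidAlgebra ℂ A →ₗ[ℂ] MonoidAlgebra ℂ G :=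
  MonoidAlgebra.mapDomainLinearMap ℂ ℂ p

/-- The statement `u · v = 1` in the algebra `ℂ[G] ⊗ ℂ[G]`. -/
noncomputable def GroupAlgebra.MulEqOne (G : Type*) [Group G]
    (u v : MonoidAlgebra ℂ G ⊗[ℂ] MonoidAlgebra ℂ G) : Prop := u * v = 1

/-- The statement `u · v = w` in the algebra `ℂ[G] ⊗ ℂ[G]`. -/
noncomputable def GroupAlgebra.MulEq (G : Type*) [Group G]
    (u v w : MonoidAlgebra ℂ G ⊗[ℂ] MonoidAlgebra ℂ G) : Prop := u * v = w

/-- The element `|A|⁻¹ Σ_{x ∈ A, χ ∈ A*} χ(x)^s · f(x) ⊗ χ` of `ℂ[G̃] ⊗ ℂ[G̃]`, where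
`G̃ = G ⋉ A*` and `A*`, `G` are regarded as subgroups of `G̃`.  Taking `f = π⁻¹` and `s = 1`
gives the element `J̄` of Section 4; taking `f = π⁻¹ ∘ T` and `s = -1` gives its inverse. -/
noncomputable def GroupAlgebra.barJ (G A : Type*) [Group G] [CommGroup A] [Fintype A]
    [Fintype (A →* ℂˣ)] (φt : G →* MulAut (A →* ℂˣ)) (f : A → G) (s : ℤ) :
    MonoidAlgebra ℂ ((A →* ℂˣ) ⋊[φt] G) ⊗[ℂ] MonoidAlgebra ℂ ((A →* ℂˣ) ⋊[φt] G) :=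
  (Fintype.card A : ℂ)⁻¹ •
    ∑ x : A, ∑ χ : A →* ℂˣ,
      ((χ x ^ s : ℂˣ) : ℂ) •
        (MonoidAlgebra.of ℂ ((A →* ℂˣ) ⋊[φt] G) (SemidirectProduct.inr (f x)) ⊗ₜ[ℂ]
          MonoidAlgebra.of ℂ ((A →* ℂˣ) ⋊[φt] G) (SemidirectProduct.inl χ))


set_option linter.unusedSectionVars false

section auxChars
variable {A : Type*} [CommGroup A] [Fintype A] [Fintype (A →* ℂˣ)]

lemma aux_hasEnough : HasEnoughRootsOfUnity ℂ (Monoid.exponent A) := by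
  haveI : NeZero ((Monoid.exponent A : ℂ)) :=
    ⟨Nat.cast_ne_zero.mpr Monoid.exponent_ne_zero_of_finite⟩
  infer_instance

lemma aux_card_char : Fintype.card (A →* ℂˣ) = Fintype.card A := by
  haveI := aux_hasEnough (A := A)
  exact Fintype.card_congr
    (CommGroup.monoidHom_mulEquiv_of_hasEnoughRootsOfUnity A ℂ).some.toEquiv

lemma aux_exists_char {a : A} (ha : a ≠ 1) : ∃ χ : A →* ℂˣ, χ a ≠ 1 := by
  haveI := aux_hasEnough (A := A)
  exact CommGroup.exists_apply_ne_one_of_hasEnoughRootsOfUnity A ℂ ha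

lemma aux_sum_char_one : ∑ χ : A →* ℂˣ, ((χ (1 : A) : ℂˣ) : ℂ) = (Fintype.card A : ℂ) := by
  simp [aux_card_char]

lemma aux_sum_char_ne {b : A} (hb : b ≠ 1) : ∑ χ : A →* ℂˣ, ((χ b : ℂˣ) : ℂ) = 0 := by
  obtain ⟨χ₀, hχ₀⟩ := aux_exists_char hb
  have key : ((χ₀ b : ℂˣ) : ℂ) * ∑ χ : A →* ℂˣ, ((χ b : ℂˣ) : ℂ)
      = ∑ χ : A →* ℂˣ, ((χ b : ℂˣ) : ℂ) := by
    rw [Finset.mul_sum]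
    exact Fintype.sum_equiv (Equiv.mulLeft χ₀) _ _ (fun χ => by simp)
  have h2 : (((χ₀ b : ℂˣ) : ℂ) - 1) * ∑ χ : A →* ℂˣ, ((χ b : ℂˣ) : ℂ) = 0 := by
    linear_combination key
  rcases mul_eq_zero.mp h2 with h | h
  · exact absurd (Units.ext (sub_eq_zero.mp h)) hχ₀
  · exact h

lemma aux_sum_elem_ne {χ : A →* ℂˣ} (hχ : χ ≠ 1) : ∑ a : A, ((χ a : ℂˣ) : ℂ) = 0 := by
  obtain ⟨b, hb⟩ : ∃ b : A, χ b ≠ 1 := by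
    by_contra h
    push_neg at h
    exact hχ (MonoidHom.ext fun a => by simp [h a])
  have key : ((χ b : ℂˣ) : ℂ) * ∑ a : A, ((χ a : ℂˣ) : ℂ) = ∑ a : A, ((χ a : ℂˣ) : ℂ) := by
    rw [Finset.mul_sum]
    exact Fintype.sum_equiv (Equiv.mulLeft b) _ _ (fun a => by simp)
  have h2 : (((χ b : ℂˣ) : ℂ) - 1) * ∑ a : A, ((χ a : ℂˣ) : ℂ) = 0 := by
    linear_combination key
  rcases mul_eq_zero.mp h2 with h | h
  · exact absurd (Units.ext (sub_eq_zero.mp h)) hb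
  · exact h

end auxChars

section auxDk

variable {G A : Type*} [Group G] [CommGroup A] [Fintype A] [Fintype (A →* ℂˣ)]
  (φt : G →* MulAut (A →* ℂˣ))

/-- auxiliary element `Σ_χ χ(a) e_{inl χ}` of `ℂ[G̃]`. -/
noncomputable def auxDk (a : A) : MonoidAlgebra ℂ ((A →* ℂˣ) ⋊[φt] G) :=
  ∑ χ : A →* ℂˣ, ((χ a : ℂˣ) : ℂ) •
    MonoidAlgebra.of ℂ ((A →* ℂˣ) ⋊[φt] G) (SemidirectProduct.inl χ)

lemma auxDk_mul (a b : A) :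
    auxDk φt a * auxDk φt b = (∑ χ : A →* ℂˣ, ((χ (a * b⁻¹) : ℂˣ) : ℂ)) • auxDk φt b := by
  unfold auxDk
  rw [Finset.sum_mul_sum, Finset.smul_sum]
  set u : (A →* ℂˣ) → MonoidAlgebra ℂ ((A →* ℂˣ) ⋊[φt] G) :=
    fun χ => MonoidAlgebra.of ℂ ((A →* ℂˣ) ⋊[φt] G) (SemidirectProduct.inl χ) with hu
  have hterm : ∀ ρ σ : A →* ℂˣ,
      (((ρ a : ℂˣ) : ℂ) • u ρ) * ((((ρ⁻¹ * σ) b : ℂˣ) : ℂ) • u (ρ⁻¹ * σ))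
        = (((ρ (a * b⁻¹) : ℂˣ) : ℂ) * ((σ b : ℂˣ) : ℂ)) • u σ := by
    intro ρ σ
    have h1 : u ρ * u (ρ⁻¹ * σ) = u σ := by
      rw [hu]
      rw [← map_mul, ← map_mul]
      congr 1
      exact congrArg _ (mul_inv_cancel_left ρ σ)
    have h2 : (ρ a) * ((ρ⁻¹ * σ) b) = (ρ (a * b⁻¹)) * (σ b) := by
      simp only [MonoidHom.mul_apply, MonoidHom.inv_apply, map_mul, map_inv]
      group
    rw [smul_mul_smul_comm, h1, ← Units.val_mul, h2, Units.val_mul]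
  calc
    ∑ χ : A →* ℂˣ, ∑ τ : A →* ℂˣ, (((χ a : ℂˣ) : ℂ) • u χ) * (((τ b : ℂˣ) : ℂ) • u τ)
        = ∑ ρ : A →* ℂˣ, ∑ σ : A →* ℂˣ,
            (((ρ a : ℂˣ) : ℂ) • u ρ) * ((((ρ⁻¹ * σ) b : ℂˣ) : ℂ) • u (ρ⁻¹ * σ)) := by
      refine Finset.sum_congr rfl fun ρ _ => ?_
      refine (Fintype.sum_equiv (Equiv.mulLeft ρ⁻¹)
        (fun σ => (((ρ a : ℂˣ) : ℂ) • u ρ) * ((((ρ⁻¹ * σ) b : ℂˣ) : ℂ) • u (ρ⁻¹ * σ)))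
        (fun τ => (((ρ a : ℂˣ) : ℂ) • u ρ) * (((τ b : ℂˣ) : ℂ) • u τ))
        (fun σ => by rw [Equiv.coe_mulLeft])).symm
    _ = ∑ σ : A →* ℂˣ, ∑ ρ : A →* ℂˣ,
            (((ρ a : ℂˣ) : ℂ) • u ρ) * ((((ρ⁻¹ * σ) b : ℂˣ) : ℂ) • u (ρ⁻¹ * σ)) :=
      Finset.sum_comm
    _ = ∑ σ : A →* ℂˣ, (∑ χ : A →* ℂˣ, ((χ (a * b⁻¹) : ℂˣ) : ℂ)) • ((σ b : ℂˣ) : ℂ) • u σ := by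
      refine Finset.sum_congr rfl fun σ _ => ?_
      rw [smul_smul, Finset.sum_mul, Finset.sum_smul]
      exact Finset.sum_congr rfl fun ρ _ => hterm ρ σ

lemma auxDk_mul_self (a : A) :
    auxDk φt a * auxDk φt a = (Fintype.card A : ℂ) • auxDk φt a := by
  rw [auxDk_mul, mul_inv_cancel]
  rw [aux_sum_char_one]

lemma auxDk_mul_ne {a b : A} (h : a ≠ b) : auxDk φt a * auxDk φt b = 0 := by
  rw [auxDk_mul, aux_sum_char_ne, zero_smul]
  simpa [mul_inv_eq_one] using h

lemma aux_sum_Dk : ∑ a : A, auxDk φt a = (Fintype.card A : ℂ) • 1 := by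
  unfold auxDk
  rw [Finset.sum_comm]
  have : ∀ χ : A →* ℂˣ,
      ∑ a : A, ((χ a : ℂˣ) : ℂ) •
          MonoidAlgebra.of ℂ ((A →* ℂˣ) ⋊[φt] G) (SemidirectProduct.inl χ)
        = (∑ a : A, ((χ a : ℂˣ) : ℂ)) •
          MonoidAlgebra.of ℂ ((A →* ℂˣ) ⋊[φt] G) (SemidirectProduct.inl χ) := by
    intro χ; rw [Finset.sum_smul]
  rw [Finset.sum_congr rfl fun χ _ => this χ]
  rw [Finset.sum_eq_single (1 : A →* ℂˣ)]
  · simp [aux_card_char, MonoidAlgebra.one_def]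
  · intro χ _ hχ
    rw [aux_sum_elem_ne hχ, zero_smul]
  · intro h; exact absurd (Finset.mem_univ _) h

lemma aux_barJ_eq (f : A → G) (s : ℤ) :
    GroupAlgebra.barJ G A φt f s = (Fintype.card A : ℂ)⁻¹ •
      ∑ x : A, (MonoidAlgebra.of ℂ ((A →* ℂˣ) ⋊[φt] G) (SemidirectProduct.inr (f x)) ⊗ₜ[ℂ]
        auxDk φt (x ^ s)) := by
  unfold GroupAlgebra.barJ auxDk
  congr 1
  refine Finset.sum_congr rfl fun x _ => ?_
  rw [tmul_sum]
  refine Finset.sum_congr rfl fun χ _ => ?_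
  rw [tmul_smul, map_zpow]

lemma aux_barJ_mul_barJ (f g : A → G) (s : ℤ) (hs : s = 1 ∨ s = -1)
    (hfg : ∀ x : A, f x * g x⁻¹ = 1) :
    GroupAlgebra.barJ G A φt f s * GroupAlgebra.barJ G A φt g (-s) = 1 := by
  classical
  have hcard : (Fintype.card A : ℂ) ≠ 0 := Nat.cast_ne_zero.mpr Fintype.card_ne_zero
  rw [aux_barJ_eq, aux_barJ_eq, smul_mul_smul_comm, Finset.sum_mul_sum]
  set R := MonoidAlgebra ℂ ((A →* ℂˣ) ⋊[φt] G)
  set of := MonoidAlgebra.of ℂ ((A →* ℂˣ) ⋊[φt] G) with hof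
  have hxz : ∀ x z : A,
      (of (SemidirectProduct.inr (f x)) ⊗ₜ[ℂ] auxDk φt (x ^ s)) *
        (of (SemidirectProduct.inr (g z)) ⊗ₜ[ℂ] auxDk φt (z ^ (-s)))
      = if z = x⁻¹ then
          (Fintype.card A : ℂ) • ((1 : R) ⊗ₜ[ℂ] auxDk φt (x ^ s)) else 0 := by
    intro x z
    rw [Algebra.TensorProduct.tmul_mul_tmul]
    by_cases hz : z = x⁻¹
    · subst hz
      have h1 : (x⁻¹ : A) ^ (-s) = x ^ s := by
        simp [zpow_neg, inv_zpow]
      have h2 : of (SemidirectProduct.inr (f x)) * of (SemidirectProduct.inr (g x⁻¹))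
          = 1 := by
        rw [hof, ← map_mul, ← map_mul, hfg x, map_one, map_one]
      rw [h1, auxDk_mul_self, h2, if_pos rfl, tmul_smul]
    · rw [if_neg hz, auxDk_mul_ne, tmul_zero]
      intro h
      apply hz
      rcases hs with rfl | rfl
      · simp only [zpow_one, zpow_neg, inv_inv] at h
        rw [h, inv_inv]
      · simp only [zpow_one, zpow_neg, inv_inv] at h
        exact h.symm
  have hsum : (∑ x : A, ∑ z : A,
      (of (SemidirectProduct.inr (f x)) ⊗ₜ[ℂ] auxDk φt (x ^ s)) *
        (of (SemidirectProduct.inr (g z)) ⊗ₜ[ℂ] auxDk φt (z ^ (-s))))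
      = (Fintype.card A : ℂ) • ∑ x : A, ((1 : R) ⊗ₜ[ℂ] auxDk φt (x ^ s)) := by
    rw [Finset.smul_sum]
    refine Finset.sum_congr rfl fun x _ => ?_
    calc
      ∑ z : A, (of (SemidirectProduct.inr (f x)) ⊗ₜ[ℂ] auxDk φt (x ^ s)) *
          (of (SemidirectProduct.inr (g z)) ⊗ₜ[ℂ] auxDk φt (z ^ (-s)))
          = ∑ z : A, if z = x⁻¹ then
              (Fintype.card A : ℂ) • ((1 : R) ⊗ₜ[ℂ] auxDk φt (x ^ s)) else 0 :=
        Finset.sum_congr rfl fun z _ => hxz x z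
      _ = (Fintype.card A : ℂ) • ((1 : R) ⊗ₜ[ℂ] auxDk φt (x ^ s)) := by
        rw [Finset.sum_ite_eq' Finset.univ x⁻¹]
        simp
  rw [hsum]
  have hDs : (∑ x : A, ((1 : R) ⊗ₜ[ℂ] auxDk φt (x ^ s)))
      = (Fintype.card A : ℂ) • ((1 : R) ⊗ₜ[ℂ] (1 : R)) := by
    rw [← tmul_sum]
    have : (∑ x : A, auxDk φt (x ^ s)) = ∑ x : A, auxDk φt x := by
      rcases hs with rfl | rfl
      · simp
      · exact Fintype.sum_equiv (Equiv.inv A) _ _ (fun x => by simp)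
    rw [this, aux_sum_Dk, tmul_smul]
  rw [hDs]
  rw [smul_smul, smul_smul, ← Algebra.TensorProduct.one_def]
  have : (Fintype.card A : ℂ)⁻¹ * (Fintype.card A : ℂ)⁻¹ * (Fintype.card A : ℂ) *
      (Fintype.card A : ℂ) = 1 := by field_simp
  rw [this, one_smul]

end auxDk

/-- **Proposition 4.1.** Let `G` be a group, `A` a finite abelian group, `ρ : G → Aut(A)` a
homomorphism, `π : G → A` a bijective 1-cocycle, `A* = Hom(A, ℂˣ)` and `G̃ = G ⋉ A*` (with `g`
acting on `χ` by `χ ∘ ρ(g)⁻¹`).  Define `T : A → A` by `T(x) = π((π⁻¹(x⁻¹))⁻¹)`, i.e.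
`π⁻¹(x⁻¹)·π⁻¹(T(x)) = 1`.  Then `T` is a bijection of `A`, and the element
`J̄ = |A|⁻¹ Σ_{x,χ} χ(x) π⁻¹(x) ⊗ χ` of `ℂ[G̃] ⊗ ℂ[G̃]` is invertible, with inverse
`|A|⁻¹ Σ_{z,τ} τ(z)⁻¹ π⁻¹(T(z)) ⊗ τ`. -/
theorem barJ_invertible
    (G A : Type*) [Group G] [CommGroup A] [Fintype A] [Fintype (A →* ℂˣ)]
    (ρ : G →* MulAut A) (π : G ≃ A)
    (hπ : ∀ g g' : G, π (g * g') = π g * (ρ g) (π g'))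
    (φt : G →* MulAut (A →* ℂˣ))
    (hφt : ∀ (g : G) (χ : A →* ℂˣ) (a : A), (φt g χ) a = χ ((ρ g)⁻¹ a)) :
    Function.Bijective (fun x : A => π ((π.symm x⁻¹)⁻¹)) ∧
    GroupAlgebra.MulEqOne ((A →* ℂˣ) ⋊[φt] G)
      (GroupAlgebra.barJ G A φt (fun x => π.symm x) 1)
      (GroupAlgebra.barJ G A φt (fun z => π.symm (π ((π.symm z⁻¹)⁻¹))) (-1)) ∧
    GroupAlgebra.MulEqOne ((A →* ℂˣ) ⋊[φt] G)
      (GroupAlgebra.barJ G A φt (fun z => π.symm (π ((π.symm z⁻¹)⁻¹))) (-1))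
      (GroupAlgebra.barJ G A φt (fun x => π.symm x) 1) := by
  classical
  refine ⟨?_, ?_, ?_⟩
  · exact (((Equiv.inv A).trans π.symm).trans ((Equiv.inv G).trans π)).bijective
  · show _ * _ = 1
    refine aux_barJ_mul_barJ φt _ _ 1 (Or.inl rfl) fun x => ?_
    simp
  · show _ * _ = 1
    have h := aux_barJ_mul_barJ φt (fun z => π.symm (π ((π.symm z⁻¹)⁻¹)))
      (fun x => π.symm x) (-1) (Or.inr rfl) (fun x => by simp)
    have h1 : (-(-1 : ℤ)) = 1 := by norm_num
    rw [h1] at h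
    exact h
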